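/- For every integer m ≥ 4, the integral ∫_{m−3/2}^{m} ((4m−8)/(4m−7)·t − (m−1)) · (t(2m−3−t))^{2m−7} · (2m−3−2t)² dt is strictly positive. -/

import Mathlib

open MeasureTheory intervalIntegral

set_option maxHeartbeats 1600000 in
/-- Lemma 3.9: for every integer `m ≥ 4`,
`∫_{m−3/2}^{m} ((4m−8)/(4m−7)·t − (m−1)) (t(2m−3−t))^{2m−7} (2m−3−2t)² dt > 0`. -/
theorem lemma_inequality1 (m : ℕ) (hm : 4 ≤ m) :
    0 < ∫ t in ((m : ℝ) - 3 / 2)..(m : ℝ),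
        ((4 * (m : ℝ) - 8) / (4 * (m : ℝ) - 7) * t - ((m : ℝ) - 1)) *
          (t * (2 * (m : ℝ) - 3 - t)) ^ (2 * m - 7) * (2 * (m : ℝ) - 3 - 2 * t) ^ 2 := by
  have hM : (4:ℝ) ≤ (m:ℝ) := by exact_mod_cast hm
  set M : ℝ := (m:ℝ) with hMdef
  have h8 : (0:ℝ) < 4*M - 8 := by linarith
  have h7 : (0:ℝ) < 4*M - 7 := by linarith
  set A : ℝ := (4*M-8)/(4*M-7) with hA
  have hApos : 0 < A := div_pos h8 h7
  set c : ℝ := M - 3/2 with hc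
  set u₀ : ℝ := (3*M-5)/(4*M-8) with hu0
  set t₀ : ℝ := c + u₀ with ht0
  have hu0pos : 0 < u₀ := div_pos (by linarith) h8
  have hu0le : u₀ ≤ 7/8 := by rw [hu0, div_le_iff₀ h8]; linarith
  set N : ℕ := 2*m - 7 with hN
  have hNcast : (N:ℝ) = 2*M - 7 := by
    rw [hN, Nat.cast_sub (by omega : 7 ≤ 2*m)]; push_cast; ring
  have hAt0 : A * t₀ = M - 1 := by
    rw [hA, ht0, hc, hu0]; field_simp; ring
  have hct0 : c ≤ t₀ := by rw [ht0]; linarith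
  have ht0M : t₀ ≤ M := by rw [ht0, hc]; linarith
  have hcM : c ≤ M := le_trans hct0 ht0M
  have hc2pos : (0:ℝ) < c^2 := by rw [hc]; nlinarith
  have hgmpos : (0:ℝ) < M*(M-3) := by nlinarith
  -- the weight function and the polynomial factor
  set g : ℝ → ℝ := fun t => t*(2*M-3-t) with hg
  set ψ : ℝ → ℝ := fun t => 4*A*(t-t₀)*(t-c)^2 with hψ
  -- rewrite the integrand
  have hrw : (∫ t in c..M,
        ((4*M-8)/(4*M-7) * t - (M - 1)) * (t * (2*M-3-t)) ^ N * (2*M-3-2*t) ^ 2)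
      = ∫ t in c..M, ψ t * (g t)^N := by
    apply intervalIntegral.integral_congr
    intro t _
    have h1 : (4*M-8)/(4*M-7) * t - (M - 1) = A*(t - t₀) := by
      rw [← hAt0, hA]; ring
    simp only [hψ, hg]
    rw [h1, hc]
    rw [ht0, hc]
    ring
  rw [hrw]
  -- continuity / integrability
  have hcont : Continuous (fun t => ψ t * (g t)^N) := by
    apply Continuous.mul
    · exact (continuous_const.mul (continuous_id.sub continuous_const)).mul
        ((continuous_id.sub continuous_const).pow 2)
    · exact (continuous_id.mul (continuous_const.sub continuous_id)).pow N
  have hψcont : Continuous ψ := by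
    exact (continuous_const.mul (continuous_id.sub continuous_const)).mul
      ((continuous_id.sub continuous_const).pow 2)
  -- split the integral at t₀
  have hsplit : (∫ t in c..M, ψ t * (g t)^N)
      = (∫ t in c..t₀, ψ t * (g t)^N) + ∫ t in t₀..M, ψ t * (g t)^N :=
    (intervalIntegral.integral_add_adjacent_intervals
      (hcont.intervalIntegrable _ _) (hcont.intervalIntegrable _ _)).symm
  -- pointwise bounds on g
  have hgle : ∀ t : ℝ, g t ≤ c^2 := by
    intro t; simp only [hg]; rw [hc]; nlinarith [sq_nonneg (t - (M - 3/2))]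
  have hgge : ∀ t ∈ Set.Icc c M, M*(M-3) ≤ g t := by
    intro t ht
    have h1 : c ≤ t := ht.1
    have h2 : t ≤ M := ht.2
    simp only [hg]
    rw [hc] at h1
    nlinarith
  -- first interval: lower bound by (c²)^N * ψ
  have hI1 : (∫ t in c..t₀, (c^2)^N * ψ t) ≤ ∫ t in c..t₀, ψ t * (g t)^N := by
    apply intervalIntegral.integral_mono_on hct0
      ((continuous_const.mul hψcont).intervalIntegrable _ _)
      (hcont.intervalIntegrable _ _)
    intro t ht
    have hψt : ψ t ≤ 0 := by
      simp only [hψ]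
      have h1 : t - t₀ ≤ 0 := by linarith [ht.2]
      nlinarith [mul_nonneg (mul_nonneg hApos.le (sq_nonneg (t-c)))
        (by linarith : (0:ℝ) ≤ t₀ - t)]
    have hg0 : 0 ≤ g t := le_trans hgmpos.le
      (hgge t ⟨ht.1, le_trans ht.2 ht0M⟩)
    have hgN : (g t)^N ≤ (c^2)^N := pow_le_pow_left₀ hg0 (hgle t) N
    calc (c^2)^N * ψ t = ψ t * (c^2)^N := by ring
      _ ≤ ψ t * (g t)^N := mul_le_mul_of_nonpos_left hgN hψt
  -- second interval: lower bound by (M(M-3))^N * ψ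
  have hI2 : (∫ t in t₀..M, (M*(M-3))^N * ψ t) ≤ ∫ t in t₀..M, ψ t * (g t)^N := by
    apply intervalIntegral.integral_mono_on ht0M
      ((continuous_const.mul hψcont).intervalIntegrable _ _)
      (hcont.intervalIntegrable _ _)
    intro t ht
    have hψt : 0 ≤ ψ t := by
      simp only [hψ]
      have h1 : 0 ≤ t - t₀ := by linarith [ht.1]
      nlinarith [mul_nonneg (mul_nonneg hApos.le (sq_nonneg (t-c))) h1]
    have hgN : (M*(M-3))^N ≤ (g t)^N :=
      pow_le_pow_left₀ hgmpos.le (hgge t ⟨le_trans hct0 ht.1, ht.2⟩) N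
    calc (M*(M-3))^N * ψ t ≤ (g t)^N * ψ t :=
          mul_le_mul_of_nonneg_right hgN hψt
      _ = ψ t * (g t)^N := by ring
  -- antiderivative of ψ and FTC
  have hFTC : ∀ a b : ℝ, (∫ t in a..b, ψ t)
      = (A*((b-c)^4 - (4/3)*u₀*(b-c)^3)) - (A*((a-c)^4 - (4/3)*u₀*(a-c)^3)) := by
    intro a b
    apply intervalIntegral.integral_eq_sub_of_hasDerivAt
      (f := fun t => A*((t-c)^4 - (4/3)*u₀*(t-c)^3))
    · intro t _
      have h1 : HasDerivAt (fun t : ℝ => t - c) 1 t := (hasDerivAt_id t).sub_const c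
      have h := ((h1.pow 4).sub (HasDerivAt.const_mul ((4/3)*u₀) (h1.pow 3))).const_mul A
      refine h.congr_deriv ?_
      simp only [hψ]
      rw [ht0]
      push_cast
      ring
    · exact hψcont.intervalIntegrable _ _
  -- values of the two polynomial integrals
  have hval1 : (∫ t in c..t₀, (c^2)^N * ψ t) = (c^2)^N * (-A*u₀^4/3) := by
    rw [intervalIntegral.integral_const_mul, hFTC, ht0]; ring
  have hval2 : (∫ t in t₀..M, (M*(M-3))^N * ψ t)
      = (M*(M-3))^N * (A*(81/16 - (9/2)*u₀ + u₀^4/3)) := by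
    rw [intervalIntegral.integral_const_mul, hFTC, ht0, hc]; ring
  -- Bernoulli-type bound: (M(M-3))^N ≥ (4/9)(c²)^N
  have hquad : 81*(2*M-7) ≤ 20*c^2 := by
    rcases (show m = 4 ∨ m = 5 ∨ 6 ≤ m by omega) with h|h|h
    · subst h; rw [hc]; norm_num [hMdef]
    · subst h; rw [hc]; norm_num [hMdef]
    · have h6 : (6:ℝ) ≤ M := by rw [hMdef]; exact_mod_cast h
      rw [hc]
      nlinarith [mul_nonneg (by linarith : (0:ℝ) ≤ M - 6) (by linarith : (0:ℝ) ≤ 10*M - 51)]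
  have hBer : (4/9) * (c^2)^N ≤ (M*(M-3))^N := by
    set a : ℝ := -(9/(4*c^2)) with ha
    have haval : 9/(4*c^2) ≤ 9/16 := by
      apply div_le_div_of_nonneg_left (by norm_num) (by norm_num)
      nlinarith [hc2pos]
    have ha2 : (-2:ℝ) ≤ a := by rw [ha]; nlinarith [div_pos (by norm_num : (0:ℝ)<9) (by positivity : (0:ℝ) < 4*c^2)]
    have hBern : 1 + (N:ℝ)*a ≤ (1+a)^N := one_add_mul_le_pow ha2 N
    have h59 : (N:ℝ) * (9/(4*c^2)) ≤ 5/9 := by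
      rw [hNcast, mul_div_assoc', div_le_div_iff₀ (by positivity) (by norm_num)]
      nlinarith [hquad]
    have h49 : (4/9:ℝ) ≤ 1 + (N:ℝ)*a := by
      rw [ha]; nlinarith [h59]
    have hfact : M*(M-3) = c^2 * (1 + a) := by
      have h9 : c^2 * (1 + a) = c^2 - 9/4 := by
        have hc0 : c ≠ 0 := fun h0 => by rw [h0] at hc2pos; norm_num at hc2pos
        rw [ha]; field_simp; ring
      rw [h9, hc]; ring
    calc (4/9) * (c^2)^N ≤ (1+a)^N * (c^2)^N := by
          apply mul_le_mul_of_nonneg_right _ (by positivity)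
          exact le_trans h49 hBern
      _ = (M*(M-3))^N := by rw [hfact, mul_pow]; ring
  -- final positivity
  have hu4 : u₀^4 ≤ (7/8)^4 := pow_le_pow_left₀ hu0pos.le hu0le 4
  have hI2pos : (0:ℝ) ≤ A*(81/16 - (9/2)*u₀ + u₀^4/3) := by
    have : (0:ℝ) ≤ 81/16 - (9/2)*u₀ + u₀^4/3 := by nlinarith [pow_nonneg hu0pos.le 4]
    positivity
  have hBer2 : (4/9) * (c^2)^N * (A*(81/16 - (9/2)*u₀ + u₀^4/3))
      ≤ (M*(M-3))^N * (A*(81/16 - (9/2)*u₀ + u₀^4/3)) :=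
    mul_le_mul_of_nonneg_right hBer hI2pos
  have hfinal : (0:ℝ) < (c^2)^N * (-A*u₀^4/3)
      + (4/9) * (c^2)^N * (A*(81/16 - (9/2)*u₀ + u₀^4/3)) := by
    have heq : (c^2)^N * (-A*u₀^4/3)
        + (4/9) * (c^2)^N * (A*(81/16 - (9/2)*u₀ + u₀^4/3))
        = (c^2)^N * A * (9/4 - 2*u₀ - (5/27)*u₀^4) := by ring
    rw [heq]
    have hpos : (0:ℝ) < 9/4 - 2*u₀ - (5/27)*u₀^4 := by nlinarith [hu4]
    positivity
  rw [hsplit]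
  calc (0:ℝ) < (c^2)^N * (-A*u₀^4/3)
      + (4/9) * (c^2)^N * (A*(81/16 - (9/2)*u₀ + u₀^4/3)) := hfinal
    _ ≤ (∫ t in c..t₀, (c^2)^N * ψ t) + (∫ t in t₀..M, (M*(M-3))^N * ψ t) := by
        rw [hval1, hval2]; linarith [hBer2]
    _ ≤ (∫ t in c..t₀, ψ t * (g t)^N) + ∫ t in t₀..M, ψ t * (g t)^N := by
        linarith [hI1, hI2]
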